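/- Let A = [[4,3,0],[-3,4,0],[0,0,5]] and B = [[4,0,3],[0,5,0],[-3,0,4]] as rational 3×3 matrices. For any n ≥ 0 and any sequences X_1,...,X_n and Y_1,...,Y_n with each X_j, Y_j ∈ {A,B}, let u = Y_1⁻¹·...·Y_n⁻¹·X_n·...·X_1·(1,0,0)ᵀ. Then u[2]² + u[3]² = 0 if and only if X_j = Y_j for all 1 ≤ j ≤ n. -/

import Mathlib

namespace AW
open Matrix

instance : Fact (Nat.Prime 5) := ⟨by norm_num⟩
def AZ : Matrix (Fin 3) (Fin 3) ℤ := !![4, 3, 0; -3, 4, 0; 0, 0, 5]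
def BZ : Matrix (Fin 3) (Fin 3) ℤ := !![4, 0, 3; 0, 5, 0; -3, 0, 4]
def mz (b : Bool) : Matrix (Fin 3) (Fin 3) ℤ := if b then AZ else BZ
def Aq : Matrix (Fin 3) (Fin 3) ℚ := !![4, 3, 0; -3, 4, 0; 0, 0, 5]
def Bq : Matrix (Fin 3) (Fin 3) ℚ := !![4, 0, 3; 0, 5, 0; -3, 0, 4]
def mq (b : Bool) : Matrix (Fin 3) (Fin 3) ℚ := if b then Aq else Bq

def Vz (l : List Bool) : Fin 3 → ℤ := ((l.map mz).prod).mulVec ![1, 0, 0]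
lemma Vz_nil : Vz [] = ![1, 0, 0] := by simp [Vz]
lemma Vz_cons (b : Bool) (l : List Bool) : Vz (b :: l) = (mz b).mulVec (Vz l) := by
  simp [Vz, Matrix.mulVec_mulVec]
def mv (b : Bool) : Matrix (Fin 3) (Fin 3) (ZMod 5) := (mz b).map (Int.cast)
def wz (l : List Bool) : Fin 3 → ZMod 5 := fun i => ((Vz l i : ℤ) : ZMod 5)
lemma wz_cons (b : Bool) (l : List Bool) : wz (b :: l) = (mv b).mulVec (wz l) := by
  funext i
  rw [wz, Vz_cons]
  exact RingHom.map_mulVec (Int.castRingHom (ZMod 5)) _ _ i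
lemma mv_true : mv true = !![4, 3, 0; 2, 4, 0; 0, 0, 0] := by
  ext i j; fin_cases i <;> fin_cases j <;> simp [mv, mz, AZ] <;> decide
lemma mv_false : mv false = !![4, 0, 3; 0, 0, 0; 2, 0, 4] := by
  ext i j; fin_cases i <;> fin_cases j <;> simp [mv, mz, BZ] <;> decide
lemma wz_nil : wz [] = ![1, 0, 0] := by
  funext i; fin_cases i <;> simp [wz, Vz_nil]

lemma inv5 : ∀ (l : List Bool) (b : Bool), ∃ t : ZMod 5, t ≠ 0 ∧
    wz (b :: l) = (if b then ![t, 3 * t, 0] else ![t, 0, 3 * t]) := by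
  intro l
  induction l with
  | nil =>
      intro b
      refine ⟨4, by decide, ?_⟩
      rw [wz_cons, wz_nil]
      cases b
      · rw [mv_false]; decide
      · rw [mv_true]; decide
  | cons b' l ih =>
      intro b
      obtain ⟨t, ht, hw⟩ := ih b'
      rw [wz_cons, hw]
      cases b <;> cases b'
      · exact ⟨3 * t, mul_ne_zero (by decide) ht, by
          rw [mv_false]; clear hw ht; revert t; decide⟩
      · exact ⟨4 * t, mul_ne_zero (by decide) ht, by
          rw [mv_false]; clear hw ht; revert t; decide⟩
      · exact ⟨4 * t, mul_ne_zero (by decide) ht, by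
          rw [mv_true]; clear hw ht; revert t; decide⟩
      · exact ⟨3 * t, mul_ne_zero (by decide) ht, by
          rw [mv_true]; clear hw ht; revert t; decide⟩

lemma smul25 : ((25:ℤ) • (1 : Matrix (Fin 3) (Fin 3) ℤ)) = !![25,0,0; 0,25,0; 0,0,25] := by
  ext i j; fin_cases i <;> fin_cases j <;> simp [Matrix.one_apply, Matrix.vecHead, Matrix.vecTail]

lemma ATA : (AZ)ᵀ * AZ = (25 : ℤ) • 1 := by
  have hT : AZᵀ = !![4, -3, 0; 3, 4, 0; 0, 0, 5] := by
    ext i j; fin_cases i <;> fin_cases j <;> rfl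
  rw [hT, smul25, AZ, Matrix.mul_fin_three]
  norm_num

lemma BTB : (BZ)ᵀ * BZ = (25 : ℤ) • 1 := by
  have hT : BZᵀ = !![4, 0, -3; 0, 5, 0; 3, 0, 4] := by
    ext i j; fin_cases i <;> fin_cases j <;> rfl
  rw [hT, smul25, BZ, Matrix.mul_fin_three]
  norm_num

lemma mzTmz (b : Bool) : (mz b)ᵀ * mz b = (25 : ℤ) • 1 := by
  cases b
  · exact BTB
  · exact ATA

lemma mz_mulVec_inj (b : Bool) {v w : Fin 3 → ℤ}
    (h : (mz b).mulVec v = (mz b).mulVec w) : v = w := by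
  have h2 : ((mz b)ᵀ * mz b).mulVec v = ((mz b)ᵀ * mz b).mulVec w := by
    rw [← Matrix.mulVec_mulVec, ← Matrix.mulVec_mulVec, h]
  rw [mzTmz, Matrix.smul_mulVec, Matrix.smul_mulVec,
    Matrix.one_mulVec, Matrix.one_mulVec] at h2
  exact smul_right_injective (Fin 3 → ℤ) (by norm_num : (25:ℤ) ≠ 0) h2

lemma normsq : ∀ l : List Bool, Vz l ⬝ᵥ Vz l = 25 ^ l.length := by
  intro l
  induction l with
  | nil => simp [Vz_nil, dotProduct, Fin.sum_univ_three]
  | cons b l ih =>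
      rw [Vz_cons]
      have key : (mz b *ᵥ Vz l) ⬝ᵥ (mz b *ᵥ Vz l)
          = Vz l ⬝ᵥ (((mz b)ᵀ * mz b) *ᵥ Vz l) := by
        rw [Matrix.dotProduct_mulVec, Matrix.vecMul_mulVec, Matrix.dotProduct_mulVec]
      rw [key, mzTmz, Matrix.smul_mulVec, Matrix.one_mulVec,
        dotProduct_smul, ih]
      simp [pow_succ, smul_eq_mul]
      ring

lemma three_mul_eq_zero : ∀ t : ZMod 5, 3 * t = 0 → t = 0 := by decide

lemma inj : ∀ (lx ly : List Bool), lx.length = ly.length → ∀ c : ℤ, (c = 1 ∨ c = -1) →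
    Vz lx = c • Vz ly → lx = ly := by
  intro lx
  induction lx with
  | nil =>
      intro ly hlen _ _ _
      exact ((List.length_eq_zero_iff.mp hlen.symm)).symm
  | cons x lx ih =>
      intro ly hlen c hc h
      cases ly with
      | nil => simp at hlen
      | cons y ly =>
          have hc5 : (c : ZMod 5) ≠ 0 := by rcases hc with rfl | rfl <;> decide
          have h5 : ∀ i, wz (x :: lx) i = (c : ZMod 5) * wz (y :: ly) i := by
            intro i
            have hh := congrFun h i
            simp only [Pi.smul_apply, smul_eq_mul] at hh
            rw [wz, wz, hh]
            push_cast
            ring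
          obtain ⟨t, ht, hwx⟩ := inv5 lx x
          obtain ⟨s, hs, hwy⟩ := inv5 ly y
          have hxy : x = y := by
            cases x <;> cases y
            · rfl
            · exfalso
              have h2 := h5 2
              rw [hwx, hwy] at h2
              simp only [if_true, if_false] at h2
              -- h2 : ![t,0,3*t] 2 = c * (![s,3*s,0] 2)
              apply ht
              apply three_mul_eq_zero
              simpa using h2
            · exfalso
              have h1 := h5 1
              rw [hwx, hwy] at h1
              simp only [if_true, if_false] at h1
              apply ht
              apply three_mul_eq_zero
              simpa using h1
            · rfl
          subst hxy
          rw [Vz_cons, Vz_cons, ← Matrix.mulVec_smul] at h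
          exact congrArg (x :: ·) (ih ly (by simpa using hlen) c hc (mz_mulVec_inj x h))

lemma Bq_ne_Aq : Bq ≠ Aq := by
  intro h
  have := congrFun (congrFun h 1) 1
  simp [Aq, Bq] at this

lemma cast_mz (b : Bool) : (Int.castRingHom ℚ).mapMatrix (mz b) = mq b := by
  cases b <;> ext i j <;> fin_cases i <;> fin_cases j <;>
    simp [mz, mq, AZ, BZ, Aq, Bq, RingHom.mapMatrix_apply, Matrix.map_apply]

lemma prod_cast (l : List Bool) :
    (l.map mq).prod = (Int.castRingHom ℚ).mapMatrix ((l.map mz).prod) := by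
  rw [map_list_prod, List.map_map]
  have h : (⇑(Int.castRingHom ℚ).mapMatrix ∘ mz) = mq := funext cast_mz
  rw [h]

lemma castvec_e1 : ((Int.castRingHom ℚ) ∘ (![1,0,0] : Fin 3 → ℤ)) = ![1,0,0] := by
  funext i; fin_cases i <;> simp

lemma Vq (l : List Bool) :
    ((l.map mq).prod).mulVec ![1,0,0] = fun i => ((Vz l i : ℤ) : ℚ) := by
  funext i
  rw [prod_cast, ← castvec_e1, RingHom.mapMatrix_apply, ← RingHom.map_mulVec]
  rfl

lemma dot_cast (v w : Fin 3 → ℤ) :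
    (fun i => ((v i : ℤ) : ℚ)) ⬝ᵥ (fun i => ((w i : ℤ) : ℚ)) = ((v ⬝ᵥ w : ℤ) : ℚ) := by
  simp [dotProduct, Fin.sum_univ_three]

lemma det_mq (b : Bool) : (mq b).det = 125 := by
  cases b <;> simp [mq, Aq, Bq, Matrix.det_fin_three] <;> norm_num

lemma isUnit_det_prod (l : List Bool) : IsUnit ((l.map mq).prod).det := by
  induction l with
  | nil => simp
  | cons b l ih =>
      rw [List.map_cons, List.prod_cons, Matrix.det_mul]
      exact (isUnit_iff_ne_zero.mpr (by rw [det_mq]; norm_num)).mul ih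

end AW

open AW Matrix

theorem ambainis_watrous
    (n : ℕ) (X Y : Fin n → Matrix (Fin 3) (Fin 3) ℚ)
    (A : Matrix (Fin 3) (Fin 3) ℚ) (B : Matrix (Fin 3) (Fin 3) ℚ)
    (hA : A = !![4, 3, 0; -3, 4, 0; 0, 0, 5])
    (hB : B = !![4, 0, 3; 0, 5, 0; -3, 0, 4])
    (hX : ∀ j, X j = A ∨ X j = B) (hY : ∀ j, Y j = A ∨ Y j = B) :
    let u : Fin 3 → ℚ :=
      ((List.ofFn fun j => (Y j)⁻¹).prod *
        (List.ofFn fun j => X j).reverse.prod).mulVec ![1, 0, 0]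
    u 1 ^ 2 + u 2 ^ 2 = 0 ↔ ∀ j, X j = Y j := by
  intro u
  have hu : u = ((List.ofFn fun j => (Y j)⁻¹).prod *
      (List.ofFn fun j => X j).reverse.prod).mulVec ![1, 0, 0] := rfl
  clear_value u
  have hA' : A = Aq := hA
  have hB' : B = Bq := hB
  rw [hA', hB'] at hX hY
  clear hA hB hA' hB'
  classical
  -- boolean encodings
  obtain ⟨bX, hXb⟩ : ∃ b : Fin n → Bool, ∀ j, X j = mq (b j) := by
    refine ⟨fun j => decide (X j = Aq), fun j => ?_⟩
    by_cases h : X j = Aq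
    · simp [h, mq]
    · rcases hX j with h' | h'
      · exact absurd h' h
      · simp [decide_eq_false h, mq, h', Bq_ne_Aq]
  obtain ⟨bY, hYb⟩ : ∃ b : Fin n → Bool, ∀ j, Y j = mq (b j) := by
    refine ⟨fun j => decide (Y j = Aq), fun j => ?_⟩
    by_cases h : Y j = Aq
    · simp [h, mq]
    · rcases hY j with h' | h'
      · exact absurd h' h
      · simp [decide_eq_false h, mq, h', Bq_ne_Aq]
  set lx : List Bool := (List.ofFn bX).reverse with hlx
  set ly : List Bool := (List.ofFn bY).reverse with hly
  -- rewrite the products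
  have hofX : (List.ofFn fun j => X j) = (List.ofFn bX).map mq := by
    rw [List.map_ofFn]
    exact congrArg List.ofFn (funext hXb)
  have hofY : (List.ofFn fun j => Y j) = (List.ofFn bY).map mq := by
    rw [List.map_ofFn]
    exact congrArg List.ofFn (funext hYb)
  have hQx : (List.ofFn fun j => X j).reverse.prod = (lx.map mq).prod := by
    rw [hofX, hlx, List.map_reverse]
  have hQy : (List.ofFn fun j => Y j).reverse.prod = (ly.map mq).prod := by
    rw [hofY, hly, List.map_reverse]
  have hPy : (List.ofFn fun j => (Y j)⁻¹).prod = ((ly.map mq).prod)⁻¹ := by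
    have h1 : (List.ofFn fun j => (Y j)⁻¹) = ((List.ofFn fun j => Y j).map Inv.inv) := by
      rw [List.map_ofFn]; rfl
    have h2 := Matrix.list_prod_inv_reverse ((List.ofFn fun j => Y j).reverse)
    rw [List.reverse_reverse] at h2
    rw [h1, ← h2, hQy]
  rw [hPy, hQx] at hu
  have hlxlen : lx.length = n := by simp [hlx]
  have hlylen : ly.length = n := by simp [hly]
  constructor
  · intro hsum
    have e1 : u 1 ^ 2 = 0 :=
      le_antisymm (by nlinarith [sq_nonneg (u 1), sq_nonneg (u 2)]) (sq_nonneg _)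
    have e2 : u 2 ^ 2 = 0 :=
      le_antisymm (by nlinarith [sq_nonneg (u 1), sq_nonneg (u 2)]) (sq_nonneg _)
    have h1 : u 1 = 0 := by
      exact pow_eq_zero_iff (two_ne_zero) |>.mp e1
    have h2 : u 2 = 0 := by
      exact pow_eq_zero_iff (two_ne_zero) |>.mp e2
    have hu0 : u = (u 0) • ![1, 0, 0] := by
      funext i
      fin_cases i <;> simp [h1, h2]
    have hQ : (lx.map mq).prod *ᵥ ![1, 0, 0] = (u 0) • ((ly.map mq).prod *ᵥ ![1, 0, 0]) := by
      have hmul : (ly.map mq).prod *ᵥ u = (lx.map mq).prod *ᵥ ![1, 0, 0] := by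
        rw [hu, Matrix.mulVec_mulVec, ← Matrix.mul_assoc,
          Matrix.mul_nonsing_inv _ (isUnit_det_prod ly), Matrix.one_mul]
      rw [hu0, Matrix.mulVec_smul] at hmul
      exact hmul.symm
    rw [Vq lx, Vq ly] at hQ
    -- norm argument
    have hn : ((25:ℚ) ^ n) = (u 0) ^ 2 * ((25:ℚ) ^ n) := by
      have hL : (fun i => ((Vz lx i : ℤ) : ℚ)) ⬝ᵥ (fun i => ((Vz lx i : ℤ) : ℚ)) = (25:ℚ) ^ n := by
        rw [dot_cast, normsq, hlxlen]; push_cast; ring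
      have hR : (fun i => ((Vz ly i : ℤ) : ℚ)) ⬝ᵥ (fun i => ((Vz ly i : ℤ) : ℚ)) = (25:ℚ) ^ n := by
        rw [dot_cast, normsq, hlylen]; push_cast; ring
      calc (25:ℚ) ^ n = (fun i => ((Vz lx i : ℤ) : ℚ)) ⬝ᵥ (fun i => ((Vz lx i : ℤ) : ℚ)) := hL.symm
        _ = ((u 0) • fun i => ((Vz ly i : ℤ) : ℚ)) ⬝ᵥ ((u 0) • fun i => ((Vz ly i : ℤ) : ℚ)) := by
            rw [← hQ]
        _ = (u 0) ^ 2 * ((25:ℚ) ^ n) := by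
            rw [smul_dotProduct, dotProduct_smul, hR]
            simp [smul_eq_mul]; ring
    have h25 : ((25:ℚ) ^ n) ≠ 0 := by positivity
    have hsq : (u 0) ^ 2 = 1 := by
      have h' : (u 0) ^ 2 * ((25:ℚ) ^ n) = 1 * ((25:ℚ) ^ n) := by linarith
      exact mul_right_cancel₀ h25 h'
    have hcases : u 0 = 1 ∨ u 0 = -1 := by
      have hfac : (u 0 - 1) * (u 0 + 1) = 0 := by nlinarith [hsq]
      rcases mul_eq_zero.mp hfac with h | h
      · left; linarith
      · right; linarith
    obtain ⟨cz, hcz1, hcz⟩ : ∃ cz : ℤ, (cz = 1 ∨ cz = -1) ∧ ((cz : ℚ) = u 0) := by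
      rcases hcases with h | h
      · exact ⟨1, Or.inl rfl, by rw [h]; norm_num⟩
      · exact ⟨-1, Or.inr rfl, by rw [h]; norm_num⟩
    have hZ : Vz lx = cz • Vz ly := by
      funext i
      have hQi := congrFun hQ i
      simp only [Pi.smul_apply, smul_eq_mul] at hQi
      have : ((Vz lx i : ℤ) : ℚ) = ((cz * Vz ly i : ℤ) : ℚ) := by
        push_cast
        rw [hcz, hQi]
      have h' : Vz lx i = cz * Vz ly i := by exact_mod_cast this
      simpa [Pi.smul_apply, smul_eq_mul] using h'
    have hl : lx = ly := inj lx ly (by rw [hlxlen, hlylen]) cz hcz1 hZ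
    have hb : bX = bY := List.ofFn_injective (List.reverse_injective (by rw [← hlx, ← hly, hl]))
    intro j
    rw [hXb j, hYb j, congrFun hb j]
  · intro hxy
    have hXY : (lx.map mq).prod = (ly.map mq).prod := by
      rw [← hQx, ← hQy]
      congr 2
      exact congrArg List.ofFn (funext hxy)
    rw [hXY, Matrix.nonsing_inv_mul _ (isUnit_det_prod ly), Matrix.one_mulVec] at hu
    rw [hu]
    norm_num
    rfl
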